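/- Let d ≥ 2 and suppose [n] is the disjoint union of nonempty sets X_1,…,X_e. Then there exists a skew Bollobás system D = {(A_i^{(1)},…,A_i^{(d)})}_{1≤i≤m} of d-partitions of [n] with ⋃_{i=1}^m ⋃_{r=1}^d A_i^{(r)} = [n] such that ∑_{i=1}^m ( ∏_{k=1}^e binom(∑_{r=1}^d |A_i^{(r)} ∩ X_k|; |A_i^{(1)} ∩ X_k|,…,|A_i^{(d)} ∩ X_k|) )^{-1} = ∏_{k=1}^e binom(|X_k| + d - 1, d - 1); that is, the upper bound in the skew Bollobás inequality for partitioned ground sets is tight. -/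

import Mathlib

open Finset

namespace SkewBollobasAux

def cntF (n d : ℕ) (c : Fin n → Fin d) (S : Finset ℕ) : Fin d → ℕ :=
  fun r => (Finset.univ.filter fun t : Fin n => c t = r ∧ (t : ℕ) + 1 ∈ S).card

def W (n d e : ℕ) (X : Fin e → Finset ℕ) (c : Fin n → Fin d) : ℚ :=
  ∏ k, ((Nat.multinomial Finset.univ (cntF n d c (X k)) : ℕ) : ℚ)⁻¹

lemma inv_mult {d : ℕ} (a : Fin d → ℕ) :
    ((Nat.multinomial Finset.univ a : ℕ) : ℚ)⁻¹
      = (∏ r, (Nat.factorial (a r) : ℚ)) / (Nat.factorial (∑ r, a r) : ℚ) := by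
  have h := Nat.multinomial_spec (Finset.univ) a
  have h' : (∏ r, (Nat.factorial (a r) : ℚ)) * ((Nat.multinomial Finset.univ a : ℕ) : ℚ)
      = (Nat.factorial (∑ r, a r) : ℚ) := by
    exact_mod_cast congrArg (Nat.cast : ℕ → ℚ) h
  have hm : ((Nat.multinomial Finset.univ a : ℕ) : ℚ) ≠ 0 := by
    exact_mod_cast (Nat.multinomial_pos _ _).ne'
  have hs : (Nat.factorial (∑ r, a r) : ℚ) ≠ 0 := by
    exact_mod_cast (Nat.factorial_pos _).ne'
  field_simp
  linarith [h']

lemma sum_inv_mult_update {d : ℕ} (a : Fin d → ℕ) :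
    ∑ r : Fin d,
        ((Nat.multinomial Finset.univ (Function.update a r (a r + 1)) : ℕ) : ℚ)⁻¹
      = ((((∑ r, a r) + d : ℕ) : ℚ) / (((∑ r, a r) + 1 : ℕ) : ℚ))
          * ((Nat.multinomial Finset.univ a : ℕ) : ℚ)⁻¹ := by
  have hterm : ∀ r : Fin d,
      ((Nat.multinomial Finset.univ (Function.update a r (a r + 1)) : ℕ) : ℚ)⁻¹
        = ((a r + 1 : ℕ) : ℚ) * (∏ s, (Nat.factorial (a s) : ℚ))
            / (Nat.factorial ((∑ s, a s) + 1) : ℚ) := by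
    intro r
    rw [inv_mult]
    have hupd : ∀ s ∈ Finset.univ.erase r, Function.update a r (a r + 1) s = a s :=
      fun s hs => Function.update_of_ne (Finset.mem_erase.1 hs).1 _ _
    have hp : (∏ s, (Nat.factorial (Function.update a r (a r + 1) s) : ℚ))
        = ((a r + 1 : ℕ) : ℚ) * ∏ s, (Nat.factorial (a s) : ℚ) := by
      rw [← Finset.mul_prod_erase Finset.univ
          (fun s => (Nat.factorial (Function.update a r (a r + 1) s) : ℚ)) (Finset.mem_univ r),
        ← Finset.mul_prod_erase Finset.univ (fun s => (Nat.factorial (a s) : ℚ))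
          (Finset.mem_univ r)]
      rw [Finset.prod_congr rfl (fun s hs => by rw [hupd s hs])]
      rw [Function.update_self, Nat.factorial_succ]
      push_cast
      ring
    have hsu : (∑ s, Function.update a r (a r + 1) s) = (∑ s, a s) + 1 := by
      rw [← Finset.add_sum_erase Finset.univ (Function.update a r (a r + 1))
          (Finset.mem_univ r),
        ← Finset.add_sum_erase Finset.univ a (Finset.mem_univ r)]
      rw [Finset.sum_congr rfl hupd, Function.update_self]
      ring
    rw [hp, hsu]
  rw [Finset.sum_congr rfl (fun r _ => hterm r)]
  rw [inv_mult]
  rw [← Finset.sum_div, ← Finset.sum_mul]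
  have h1 : (∑ r : Fin d, ((a r + 1 : ℕ) : ℚ)) = (((∑ r, a r) + d : ℕ) : ℚ) := by
    push_cast
    rw [Finset.sum_add_distrib]
    simp
  rw [h1]
  have h2 : (Nat.factorial ((∑ s, a s) + 1) : ℚ)
      = (((∑ s, a s) + 1 : ℕ) : ℚ) * (Nat.factorial (∑ s, a s) : ℚ) := by
    rw [Nat.factorial_succ]; push_cast; ring
  rw [h2]
  have hf : (Nat.factorial (∑ s, a s) : ℚ) ≠ 0 := by
    exact_mod_cast (Nat.factorial_pos _).ne'
  have hn : (((∑ s, a s) + 1 : ℕ) : ℚ) ≠ 0 := by positivity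
  field_simp

lemma choose_ratio (d N : ℕ) (hd : 1 ≤ d) :
    (((N + 1 + d - 1).choose (d - 1) : ℕ) : ℚ)
      = (((N + d : ℕ) : ℚ) / ((N + 1 : ℕ) : ℚ)) * (((N + d - 1).choose (d - 1) : ℕ) : ℚ) := by
  obtain ⟨d', rfl⟩ : ∃ d', d = d' + 1 := ⟨d - 1, by omega⟩
  have e1 : N + 1 + (d' + 1) - 1 = N + 1 + d' := by omega
  have e2 : N + (d' + 1) - 1 = N + d' := by omega
  have e3 : d' + 1 - 1 = d' := by omega
  rw [e1, e2, e3]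
  rw [Nat.cast_choose ℚ (show d' ≤ N + 1 + d' by omega),
    Nat.cast_choose ℚ (show d' ≤ N + d' by omega)]
  have e4 : N + 1 + d' - d' = N + 1 := by omega
  have e5 : N + d' - d' = N := by omega
  rw [e4, e5]
  have hA : N + 1 + d' = (N + d') + 1 := by omega
  rw [hA, Nat.factorial_succ (N + d'), Nat.factorial_succ N]
  have h1 : (Nat.factorial d' : ℚ) ≠ 0 := by exact_mod_cast (Nat.factorial_pos _).ne'
  have h2 : (Nat.factorial N : ℚ) ≠ 0 := by exact_mod_cast (Nat.factorial_pos _).ne'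
  have h3 : (Nat.factorial (N + d') : ℚ) ≠ 0 := by exact_mod_cast (Nat.factorial_pos _).ne'
  have h4 : ((N : ℚ) + 1) ≠ 0 := by positivity
  push_cast
  field_simp
  ring

lemma card_filter_mem {n : ℕ} (S : Finset ℕ) (hS : S ⊆ Finset.Icc 1 n) :
    (Finset.univ.filter fun t : Fin n => (t : ℕ) + 1 ∈ S).card = S.card := by
  refine Finset.card_bij (fun t _ => (t : ℕ) + 1) ?_ ?_ ?_
  · intro t ht
    exact (Finset.mem_filter.1 ht).2
  · intro t1 h1 t2 h2 h
    have h' : (t1 : ℕ) + 1 = (t2 : ℕ) + 1 := h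
    exact Fin.ext (by omega)
  · intro x hx
    have hx' := hS hx
    rw [Finset.mem_Icc] at hx'
    refine ⟨⟨x - 1, by omega⟩, ?_, by simp; omega⟩
    simp only [Finset.mem_filter, Finset.mem_univ, true_and]
    simpa using (show x - 1 + 1 = x by omega) ▸ hx

lemma sum_cntF {n d : ℕ} (c : Fin n → Fin d) (S : Finset ℕ) (hS : S ⊆ Finset.Icc 1 n) :
    ∑ r, cntF n d c S r = S.card := by
  rw [← card_filter_mem S hS]
  rw [Finset.card_eq_sum_card_fiberwise
    (f := c) (t := Finset.univ) (fun x _ => Finset.mem_univ _)]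
  apply Finset.sum_congr rfl
  intro r _
  unfold cntF
  rw [Finset.filter_filter]
  congr 1
  ext t
  simp only [Finset.mem_filter, Finset.mem_univ, true_and]
  tauto



lemma mult_zero (d : ℕ) : Nat.multinomial (Finset.univ : Finset (Fin d)) (fun _ => 0) = 1 := by
  have h := Nat.multinomial_spec (Finset.univ : Finset (Fin d)) (fun _ => 0)
  simpa using h

lemma key (n : ℕ) : ∀ (d e : ℕ), 1 ≤ d → ∀ (X : Fin e → Finset ℕ),
    (∀ k l, k ≠ l → Disjoint (X k) (X l)) →
    (Finset.univ.biUnion X = Finset.Icc 1 n) →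
    ∑ c : Fin n → Fin d, W n d e X c
      = ∏ k, ((((X k).card + d - 1).choose (d - 1) : ℕ) : ℚ) := by
  induction n with
  | zero =>
    intro d e hd X hdisj hcover
    have hX : ∀ k, X k = ∅ := by
      intro k
      have h1 : X k ⊆ Finset.univ.biUnion X :=
        Finset.subset_biUnion_of_mem X (Finset.mem_univ k)
      rw [hcover] at h1
      simpa using Finset.subset_empty.1 (by simpa using h1)
    have hW : ∀ c : Fin 0 → Fin d, W 0 d e X c = 1 := by
      intro c
      unfold W cntF
      have hz : ∀ k : Fin e, (fun r : Fin d => (Finset.univ.filter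
          fun t : Fin 0 => c t = r ∧ (t : ℕ) + 1 ∈ X k).card) = fun _ => 0 := by
        intro k; funext r; simp
      calc ∏ k, ((Nat.multinomial Finset.univ
            (fun r : Fin d => (Finset.univ.filter
              fun t : Fin 0 => c t = r ∧ (t : ℕ) + 1 ∈ X k).card) : ℕ) : ℚ)⁻¹
          = ∏ k : Fin e, (1 : ℚ) := by
            apply Finset.prod_congr rfl
            intro k _
            rw [hz k, mult_zero]
            norm_num
        _ = 1 := by simp
    rw [Finset.sum_congr rfl (fun c _ => hW c)]
    have hR : ∀ k : Fin e, ((((X k).card + d - 1).choose (d - 1) : ℕ) : ℚ) = 1 := by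
      intro k
      rw [hX k]
      simp
    rw [Finset.prod_congr rfl (fun k _ => hR k)]
    simp
  | succ n ih =>
    intro d e hd X hdisj hcover
    -- locate the block containing n+1
    have hmem : (n + 1) ∈ Finset.univ.biUnion X := by
      rw [hcover, Finset.mem_Icc]; omega
    obtain ⟨k0, -, hk0⟩ := Finset.mem_biUnion.1 hmem
    have huniq : ∀ k, (n + 1) ∈ X k ↔ k = k0 := by
      intro k
      constructor
      · intro h
        by_contra hne
        exact absurd hk0 (Finset.disjoint_left.1 (hdisj k k0 hne) h)
      · rintro rfl; exact hk0
    set X' : Fin e → Finset ℕ := fun k => (X k).erase (n + 1) with hX'def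
    have hdisj' : ∀ k l, k ≠ l → Disjoint (X' k) (X' l) := by
      intro k l h
      exact Finset.disjoint_of_subset_left (Finset.erase_subset _ _)
        (Finset.disjoint_of_subset_right (Finset.erase_subset _ _) (hdisj k l h))
    have hxmem : ∀ x, (∃ k, x ∈ X k) ↔ (1 ≤ x ∧ x ≤ n + 1) := by
      intro x
      constructor
      · rintro ⟨k, hk⟩
        have hx : x ∈ Finset.univ.biUnion X :=
          Finset.mem_biUnion.2 ⟨k, Finset.mem_univ k, hk⟩
        rw [hcover] at hx
        exact Finset.mem_Icc.1 hx
      · intro h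
        obtain ⟨k, -, hk⟩ := Finset.mem_biUnion.1 (hcover ▸ Finset.mem_Icc.2 h)
        exact ⟨k, hk⟩
    have hcover' : Finset.univ.biUnion X' = Finset.Icc 1 n := by
      ext x
      simp only [Finset.mem_biUnion, Finset.mem_univ, true_and, X', Finset.mem_erase,
        Finset.mem_Icc]
      constructor
      · rintro ⟨k, hne, hk⟩
        have := (hxmem x).1 ⟨k, hk⟩
        omega
      · intro h
        obtain ⟨k, hk⟩ := (hxmem x).2 ⟨h.1, by omega⟩
        exact ⟨k, by omega, hk⟩
    have hXeq : ∀ k, k ≠ k0 → X' k = X k := by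
      intro k h
      apply Finset.erase_eq_of_notMem
      rw [huniq]; exact h
    have hcardk0 : (X k0).card = (X' k0).card + 1 := by
      rw [← Finset.insert_erase hk0]
      rw [Finset.card_insert_of_notMem (Finset.notMem_erase _ _)]
    -- reindex sum over colorings of Fin (n+1)
    rw [← Equiv.sum_comp (Fin.snocEquiv (fun _ : Fin (n + 1) => Fin d)) (W (n + 1) d e X)]
    rw [Fintype.sum_prod_type, Finset.sum_comm]
    -- counts after snoc
    have hcnt : ∀ (c' : Fin n → Fin d) (r0 : Fin d) (k : Fin e) (r : Fin d),
        cntF (n + 1) d (Fin.snoc c' r0) (X k) r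
          = cntF n d c' (X' k) r + (if k = k0 ∧ r = r0 then 1 else 0) := by
      intro c' r0 k r
      unfold cntF
      rw [Finset.card_filter, Finset.card_filter, Fin.sum_univ_castSucc]
      congr 1
      · apply Finset.sum_congr rfl
        intro t _
        apply if_congr _ rfl rfl
        rw [Fin.snoc_castSucc]
        apply and_congr_right
        intro _
        simp only [Fin.coe_castSucc, X', Finset.mem_erase]
        have : (t : ℕ) + 1 ≠ n + 1 := by have := t.isLt; omega
        tauto
      · rw [Fin.snoc_last]
        simp only [Fin.val_last, huniq k]
        apply if_congr _ rfl rfl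
        constructor
        · rintro ⟨h1, h2⟩; exact ⟨h2, h1.symm⟩
        · rintro ⟨h1, h2⟩; exact ⟨h2.symm, h1⟩
    -- per-coloring sum over the color of the new element
    have hinner : ∀ c' : Fin n → Fin d,
        ∑ r0 : Fin d, W (n + 1) d e X
            (Fin.snocEquiv (fun _ : Fin (n + 1) => Fin d) (r0, c'))
          = ((((X' k0).card + d : ℕ) : ℚ) / (((X' k0).card + 1 : ℕ) : ℚ))
              * W n d e X' c' := by
      intro c'
      have hsnoc : ∀ r0 : Fin d,
          (Fin.snocEquiv (fun _ : Fin (n + 1) => Fin d) (r0, c')) = Fin.snoc c' r0 := by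
        intro r0; rfl
      have hWsplit : ∀ r0 : Fin d,
          W (n + 1) d e X (Fin.snoc c' r0)
            = ((Nat.multinomial Finset.univ
                (Function.update (cntF n d c' (X' k0)) r0 (cntF n d c' (X' k0) r0 + 1)) : ℕ) : ℚ)⁻¹
              * ∏ k ∈ Finset.univ.erase k0,
                  ((Nat.multinomial Finset.univ (cntF n d c' (X' k)) : ℕ) : ℚ)⁻¹ := by
        intro r0
        unfold W
        rw [← Finset.mul_prod_erase Finset.univ _ (Finset.mem_univ k0)]
        congr 1
        · congr 1
          norm_cast
          congr 1
          funext r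
          rw [hcnt c' r0 k0 r, Function.update_apply]
          by_cases h : r = r0 <;> simp [h]
        · apply Finset.prod_congr rfl
          intro k hk
          have hkne : k ≠ k0 := (Finset.mem_erase.1 hk).1
          congr 1
          norm_cast
          congr 1
          funext r
          rw [hcnt c' r0 k r]
          simp [hkne]
      rw [Finset.sum_congr rfl (fun r0 _ => (hsnoc r0) ▸ hWsplit r0)]
      rw [← Finset.sum_mul]
      rw [sum_inv_mult_update (cntF n d c' (X' k0))]
      have hNs : (∑ r, cntF n d c' (X' k0) r) = (X' k0).card :=
        sum_cntF c' (X' k0) (by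
          intro x hx
          have : x ∈ Finset.univ.biUnion X' :=
            Finset.mem_biUnion.2 ⟨k0, Finset.mem_univ k0, hx⟩
          rwa [hcover'] at this)
      rw [hNs]
      unfold W
      rw [← Finset.mul_prod_erase Finset.univ _ (Finset.mem_univ k0)]
      ring
    rw [Finset.sum_congr rfl (fun c' _ => hinner c')]
    rw [← Finset.mul_sum]
    rw [ih d e hd X' hdisj' hcover']
    -- now match the right-hand side
    rw [← Finset.mul_prod_erase Finset.univ
      (fun k => ((((X' k).card + d - 1).choose (d - 1) : ℕ) : ℚ)) (Finset.mem_univ k0)]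
    rw [← Finset.mul_prod_erase Finset.univ
      (fun k => ((((X k).card + d - 1).choose (d - 1) : ℕ) : ℚ)) (Finset.mem_univ k0)]
    have herase : (∏ k ∈ Finset.univ.erase k0,
          ((((X' k).card + d - 1).choose (d - 1) : ℕ) : ℚ))
        = ∏ k ∈ Finset.univ.erase k0, ((((X k).card + d - 1).choose (d - 1) : ℕ) : ℚ) :=
      Finset.prod_congr rfl (fun k hk => by rw [hXeq k (Finset.mem_erase.1 hk).1])
    rw [herase]
    rw [hcardk0, choose_ratio d (X' k0).card hd]
    ring

lemma inter_card {n d : ℕ} (c : Fin n → Fin d) (r : Fin d) (S : Finset ℕ) :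
    (((Finset.univ.filter fun t : Fin n => c t = r).image
        (fun t : Fin n => (t : ℕ) + 1)) ∩ S).card
      = cntF n d c S r := by
  unfold cntF
  have himg : ((Finset.univ.filter fun t : Fin n => c t = r).image
        (fun t : Fin n => (t : ℕ) + 1)) ∩ S
      = (Finset.univ.filter fun t : Fin n => c t = r ∧ (t : ℕ) + 1 ∈ S).image
        (fun t : Fin n => (t : ℕ) + 1) := by
    ext x
    simp only [Finset.mem_inter, Finset.mem_image, Finset.mem_filter, Finset.mem_univ, true_and]
    constructor
    · rintro ⟨⟨t, ht, rfl⟩, hx⟩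
      exact ⟨t, ⟨ht, hx⟩, rfl⟩
    · rintro ⟨t, ⟨ht, hx⟩, rfl⟩
      exact ⟨⟨t, ht, rfl⟩, hx⟩
  rw [himg, Finset.card_image_of_injective]
  intro t1 t2 h
  have h' : (t1 : ℕ) + 1 = (t2 : ℕ) + 1 := h
  exact Fin.ext (by omega)

def pLex (n d : ℕ) (c c' : Fin n → Fin d) : Prop :=
  ∃ t : Fin n, (∀ s, s < t → c s = c' s) ∧ c t < c' t

def lexRel (n d : ℕ) (c c' : Fin n → Fin d) : Prop :=
  c = c' ∨ pLex n d c c'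

lemma pLex_trans {n d : ℕ} {a b c : Fin n → Fin d}
    (h1 : pLex n d a b) (h2 : pLex n d b c) : pLex n d a c := by
  obtain ⟨t1, he1, hl1⟩ := h1
  obtain ⟨t2, he2, hl2⟩ := h2
  rcases lt_trichotomy t1 t2 with h | rfl | h
  · exact ⟨t1, fun s hs => (he1 s hs).trans (he2 s (hs.trans h)), (he2 t1 h) ▸ hl1⟩
  · exact ⟨t1, fun s hs => (he1 s hs).trans (he2 s hs), lt_trans hl1 hl2⟩
  · exact ⟨t2, fun s hs => (he1 s (hs.trans h)).trans (he2 s hs), (he1 t2 h) ▸ hl2⟩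

lemma pLex_asymm {n d : ℕ} {a b : Fin n → Fin d}
    (h1 : pLex n d a b) (h2 : pLex n d b a) : False := by
  obtain ⟨t1, he1, hl1⟩ := h1
  obtain ⟨t2, he2, hl2⟩ := h2
  rcases lt_trichotomy t1 t2 with h | rfl | h
  · rw [he2 t1 h] at hl1; exact lt_irrefl _ hl1
  · exact lt_irrefl _ (lt_trans hl1 hl2)
  · rw [he1 t2 h] at hl2; exact lt_irrefl _ hl2

lemma pLex_total {n d : ℕ} {a b : Fin n → Fin d} (h : a ≠ b) :
    pLex n d a b ∨ pLex n d b a := by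
  have hne : (Finset.univ.filter fun t : Fin n => a t ≠ b t).Nonempty := by
    rw [Finset.filter_nonempty_iff]
    by_contra hcon
    push_neg at hcon
    exact h (funext fun t => hcon t (Finset.mem_univ t))
  set t0 := (Finset.univ.filter fun t : Fin n => a t ≠ b t).min' hne with ht0
  have ht0mem := (Finset.univ.filter fun t : Fin n => a t ≠ b t).min'_mem hne
  have ht0ne : a t0 ≠ b t0 := (Finset.mem_filter.1 ht0mem).2
  have hmin : ∀ s, s < t0 → a s = b s := by
    intro s hs
    by_contra hcon
    have : t0 ≤ s := Finset.min'_le _ s (Finset.mem_filter.2 ⟨Finset.mem_univ s, hcon⟩)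
    omega
  rcases lt_or_gt_of_ne ht0ne with hl | hl
  · exact Or.inl ⟨t0, hmin, hl⟩
  · exact Or.inr ⟨t0, fun s hs => (hmin s hs).symm, hl⟩

noncomputable instance (n d : ℕ) : DecidableRel (lexRel n d) := Classical.decRel _

instance (n d : ℕ) : IsTrans (Fin n → Fin d) (lexRel n d) := by
  constructor
  rintro a b c (rfl | h1) (rfl | h2)
  · exact Or.inl rfl
  · exact Or.inr h2
  · exact Or.inr h1
  · exact Or.inr (pLex_trans h1 h2)

instance (n d : ℕ) : IsAntisymm (Fin n → Fin d) (lexRel n d) := by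
  constructor
  rintro a b (rfl | h1) h2
  · rfl
  · rcases h2 with rfl | h2
    · rfl
    · exact absurd (pLex_asymm h1 h2) (by simp)

instance (n d : ℕ) : IsTotal (Fin n → Fin d) (lexRel n d) := by
  constructor
  intro a b
  by_cases h : a = b
  · exact Or.inl (Or.inl h)
  · rcases pLex_total h with h1 | h1
    · exact Or.inl (Or.inr h1)
    · exact Or.inr (Or.inr h1)

end SkewBollobasAux

open SkewBollobasAux in
/-- **Theorem (tightness of the skew Bollobás bound over a partitioned ground set).**
If `[n]` is the disjoint union of nonempty sets `X_1, …, X_e` and `d ≥ 2`, then there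
is a skew Bollobás system of `d`-partitions of `[n]` with support exactly `[n]`
achieving `∑_i (∏_k multinomial(…))⁻¹ = ∏_k C(|X_k| + d - 1, d - 1)`. -/
theorem skew_bollobas_partitioned_tight (n d e : ℕ) (hd : 2 ≤ d)
    (X : Fin e → Finset ℕ)
    (hXdisj : ∀ k l : Fin e, k ≠ l → Disjoint (X k) (X l))
    (hXcover : Finset.univ.biUnion X = Finset.Icc 1 n)
    (hXne : ∀ k : Fin e, (X k).Nonempty) :
    ∃ m : ℕ, ∃ A : Fin m → Fin d → Finset ℕ,
      (∀ i r, A i r ⊆ Finset.Icc 1 n) ∧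
      (∀ i, ∀ p q : Fin d, p ≠ q → Disjoint (A i p) (A i q)) ∧
      (∀ i j : Fin m, i < j →
        ∃ p q : Fin d, p < q ∧ ((A i p) ∩ (A j q)).Nonempty) ∧
      (Finset.univ.biUnion fun i : Fin m =>
        Finset.univ.biUnion fun r : Fin d => A i r) = Finset.Icc 1 n ∧
      ∑ i : Fin m, (∏ k : Fin e,
          ((Nat.multinomial Finset.univ
            fun r : Fin d => ((A i r) ∩ X k).card : ℕ) : ℚ))⁻¹
        = ∏ k : Fin e, ((((X k).card + d - 1).choose (d - 1) : ℕ) : ℚ) := by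
  classical
  haveI : NeZero d := ⟨by omega⟩
  let rel := lexRel n d
  let L := (Finset.univ : Finset (Fin n → Fin d)).sort rel
  have hm : 0 < L.length := by
    rw [Finset.length_sort]
    exact Fintype.card_pos
  refine ⟨L.length, fun i r =>
    (Finset.univ.filter fun t : Fin n => L.get i t = r).image (fun t : Fin n => (t : ℕ) + 1),
    ?_, ?_, ?_, ?_, ?_⟩
  · intro i r x hx
    obtain ⟨t, -, rfl⟩ := Finset.mem_image.1 hx
    rw [Finset.mem_Icc]
    have := t.isLt
    omega
  · intro i p q hpq
    rw [Finset.disjoint_left]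
    intro x hx1 hx2
    obtain ⟨t1, ht1, rfl⟩ := Finset.mem_image.1 hx1
    obtain ⟨t2, ht2, ht⟩ := Finset.mem_image.1 hx2
    have : t2 = t1 := Fin.ext (by omega)
    subst this
    have h1 := (Finset.mem_filter.1 ht1).2
    have h2 := (Finset.mem_filter.1 ht2).2
    exact hpq (h1 ▸ h2 ▸ rfl)
  · intro i j hij
    have hle : rel (L.get i) (L.get j) := (Finset.pairwise_sort (r := rel) _).rel_get_of_lt hij
    have hne : L.get i ≠ L.get j := by
      intro h
      exact absurd ((Finset.sort_nodup (r := rel) _).get_inj_iff.1 h) (ne_of_lt hij)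
    have hplex : pLex n d (L.get i) (L.get j) := hle.resolve_left hne
    obtain ⟨t, -, ht⟩ := hplex
    refine ⟨L.get i t, L.get j t, ht, ⟨(t : ℕ) + 1, ?_⟩⟩
    rw [Finset.mem_inter]
    constructor
    · exact Finset.mem_image.2 ⟨t, Finset.mem_filter.2 ⟨Finset.mem_univ t, rfl⟩, rfl⟩
    · exact Finset.mem_image.2 ⟨t, Finset.mem_filter.2 ⟨Finset.mem_univ t, rfl⟩, rfl⟩
  · ext x
    simp only [Finset.mem_biUnion, Finset.mem_univ, true_and]
    constructor
    · rintro ⟨i, r, hx⟩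
      obtain ⟨t, -, rfl⟩ := Finset.mem_image.1 hx
      rw [Finset.mem_Icc]
      have := t.isLt
      omega
    · intro hx
      rw [Finset.mem_Icc] at hx
      refine ⟨⟨0, hm⟩, L.get ⟨0, hm⟩ ⟨x - 1, by omega⟩, ?_⟩
      refine Finset.mem_image.2 ⟨⟨x - 1, by omega⟩,
        Finset.mem_filter.2 ⟨Finset.mem_univ _, rfl⟩, by simp; omega⟩
  · have hsummand : ∀ i : Fin L.length,
        (∏ k : Fin e,
          ((Nat.multinomial Finset.univ
            fun r : Fin d => ((((Finset.univ.filter fun t : Fin n => L.get i t = r).image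
              (fun t : Fin n => (t : ℕ) + 1))) ∩ X k).card : ℕ) : ℚ))⁻¹
          = W n d e X (L.get i) := by
      intro i
      unfold W
      rw [← Finset.prod_inv_distrib]
      apply Finset.prod_congr rfl
      intro k _
      congr 1
      norm_cast
      congr 1
      funext r
      exact inter_card (L.get i) r (X k)
    rw [Finset.sum_congr rfl (fun i _ => hsummand i)]
    have hbij : Function.Bijective (fun i : Fin L.length => L.get i) := by
      rw [Fintype.bijective_iff_injective_and_card]
      constructor
      · exact List.nodup_iff_injective_get.1 (Finset.sort_nodup (r := rel) _)
      · simp only [Fintype.card_fin]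
        show (Finset.sort Finset.univ rel).length = _
        rw [Finset.length_sort, Finset.card_univ]
    rw [Fintype.sum_bijective _ hbij _ (W n d e X) (fun i => rfl)]
    exact key n d e (by omega) X hXdisj hXcover
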